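/- The graph K'_{2,4}, obtained from the complete bipartite graph K_{2,4} by doubling the four edges incident with one of the two vertices of degree four, contains no immersion of K_{3,3} and is weakly 5-edge-connected. -/

import Mathlib

/-- A finite multigraph without loops: vertices `V`, edges `E`,
each edge has an unordered pair of distinct endpoints. -/
structure Multigraph where
  V : Type
  E : Type
  [fV : Fintype V]
  [fE : Fintype E]
  [dV : DecidableEq V]
  [dE : DecidableEq E]
  ends : E → Sym2 V
  noLoop : ∀ e, ¬ (ends e).IsDiag

attribute [instance] Multigraph.fV Multigraph.fE Multigraph.dV Multigraph.dE

namespace Multigraph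

/-- Walks in a multigraph. -/
inductive Walk (G : Multigraph) : G.V → G.V → Type
  | nil (v : G.V) : Walk G v v
  | cons {u v w : G.V} (e : G.E) (h : G.ends e = s(u, v)) (p : Walk G v w) : Walk G u w

/-- The list of edges traversed by a walk. -/
def Walk.edges {G : Multigraph} : {u v : G.V} → G.Walk u v → List G.E
  | _, _, .nil _ => []
  | _, _, .cons e _ p => e :: p.edges

/-- The list of vertices visited by a walk. -/
def Walk.support {G : Multigraph} : {u v : G.V} → G.Walk u v → List G.V
  | u, _, .nil _ => [u]
  | u, _, .cons _ _ p => u :: p.support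

/-- A walk is a path if it visits no vertex twice. -/
def Walk.IsPath {G : Multigraph} {u v : G.V} (p : G.Walk u v) : Prop := p.support.Nodup

/-- Data of an immersion of `H` into `G`: an injective map on vertices and,
for each edge of `H`, a path in `G` joining the images of its endpoints,
the paths being pairwise edge-disjoint. -/
structure ImmersionData (H G : Multigraph) where
  vmap : H.V → G.V
  inj : Function.Injective vmap
  pstart : H.E → G.V
  pend : H.E → G.V
  walk : ∀ e, G.Walk (pstart e) (pend e)
  ends_eq : ∀ e, s(pstart e, pend e) = (H.ends e).map vmap
  isPath : ∀ e, (walk e).IsPath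
  edgeDisj : ∀ e e', e ≠ e' → List.Disjoint (walk e).edges (walk e').edges

/-- `H` immerses in `G`. -/
def Immerses (H G : Multigraph) : Prop := Nonempty (ImmersionData H G)

/-- Data witnessing that `G` contains a subdivision of `H` as a subgraph
(i.e. `H` is a topological minor of `G`): as an immersion, but moreover the
paths may only meet at images of common endpoints. -/
structure SubdivisionData (H G : Multigraph) extends ImmersionData H G where
  vtxDisj : ∀ e e', e ≠ e' → ∀ x, x ∈ (walk e).support → x ∈ (walk e').support →
    ∃ w, x = vmap w ∧ w ∈ H.ends e ∧ w ∈ H.ends e'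

/-- `G` contains a subdivision of `H` as a subgraph. -/
def ContainsSubdivision (H G : Multigraph) : Prop := Nonempty (SubdivisionData H G)

/-- The complete bipartite graph `K_{3,3}`. -/
def K33 : Multigraph where
  V := Fin 3 ⊕ Fin 3
  E := Fin 3 × Fin 3
  ends e := s(Sum.inl e.1, Sum.inr e.2)
  noLoop e := by simp [Sym2.mk_isDiag_iff]

/-- The complete graph `K_5`. -/
def K5 : Multigraph where
  V := Fin 5
  E := {p : Fin 5 × Fin 5 // p.1 < p.2}
  ends e := s(e.1.1, e.1.2)
  noLoop e := by simpa [Sym2.mk_isDiag_iff] using e.2.ne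

variable (G : Multigraph)

/-- The degree of a vertex: the number of incident edges. -/
def deg (v : G.V) : ℕ := (Finset.univ.filter fun e => v ∈ G.ends e).card

/-- The multiplicity of the (possible) edge between `u` and `v`. -/
def mult (u v : G.V) : ℕ := (Finset.univ.filter fun e => G.ends e = s(u, v)).card

/-- The edge cut determined by a set `A` of vertices. -/
def cut (A : Finset G.V) : Finset G.E :=
  Finset.univ.filter fun e => ∃ u ∈ A, ∃ v ∈ Aᶜ, G.ends e = s(u, v)

/-- Every edge cut of `G` has at least `k` edges. -/
def EdgeConnGe (k : ℕ) : Prop :=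
  ∀ A : Finset G.V, A.Nonempty → A ≠ Finset.univ → k ≤ (G.cut A).card

/-- Internally 4-edge-connected: 3-edge-connected and every 3-edge cut has a
side consisting of a single vertex. -/
def Internally4EC : Prop :=
  G.EdgeConnGe 3 ∧ ∀ A : Finset G.V, A.Nonempty → A ≠ Finset.univ →
    (G.cut A).card = 3 → A.card = 1 ∨ Aᶜ.card = 1

/-- Weakly 5-edge-connected: internally 4-edge-connected and every 4-edge cut
has a side with at most two vertices. -/
def Weakly5EC : Prop :=
  G.Internally4EC ∧ ∀ A : Finset G.V, A.Nonempty → A ≠ Finset.univ →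
    (G.cut A).card = 4 → A.card ≤ 2 ∨ Aᶜ.card ≤ 2

/-- `G` is `d`-regular. -/
def IsRegular (d : ℕ) : Prop := ∀ v, G.deg v = d

/-- `G` is connected. -/
def Connected : Prop := ∀ u v : G.V, Nonempty (G.Walk u v)

/-- `v` is a cut-vertex: the remaining vertices split into two nonempty parts
with no edge between them. -/
def IsCutVertex (v : G.V) : Prop :=
  ∃ C D : Finset G.V, C.Nonempty ∧ D.Nonempty ∧ Disjoint C D ∧ v ∉ C ∧ v ∉ D ∧
    (∀ x : G.V, x ∈ C ∪ D ∨ x = v) ∧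
    ∀ e : G.E, ¬ ∃ u ∈ C, ∃ w ∈ D, G.ends e = s(u, w)

/-- `G` is 2-connected. -/
def TwoConnected : Prop :=
  G.Connected ∧ 3 ≤ Fintype.card G.V ∧ ∀ v, ¬ G.IsCutVertex v

/-- Planarity, via Kuratowski's characterization: no subdivision of `K_5`
nor of `K_{3,3}` as a subgraph. -/
def Planar : Prop := ¬ ContainsSubdivision K5 G ∧ ¬ ContainsSubdivision K33 G

end Multigraph

namespace Multigraph

/-- The graph `K'_{2,4}` obtained from `K_{2,4}` (parts `{a, b}` and
`{c_1, …, c_4}`) by doubling the four edges incident with `a`.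
Vertices: `Sum.inl 0 = a`, `Sum.inl 1 = b`, `Sum.inr i = c_i`. -/
def K24' : Multigraph where
  V := Fin 2 ⊕ Fin 4
  E := (Fin 4 × Fin 2) ⊕ Fin 4
  ends e := match e with
    | .inl p => s(Sum.inl 0, Sum.inr p.1)
    | .inr i => s(Sum.inl 1, Sum.inr i)
  noLoop e := match e with
    | .inl _ => by simp [Sym2.mk_isDiag_iff]
    | .inr _ => by simp [Sym2.mk_isDiag_iff]

end Multigraph

namespace Multigraph
variable {G : Multigraph}

lemma Walk.start_mem_support {u v : G.V} (p : G.Walk u v) : u ∈ p.support := by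
  cases p <;> simp [Walk.support]

lemma Walk.end_mem_support {u v : G.V} (p : G.Walk u v) : v ∈ p.support := by
  induction p with
  | nil => simp [Walk.support]
  | cons e h p ih => simp [Walk.support, ih]

lemma Walk.mem_support_of_mem_edges {u v : G.V} (p : G.Walk u v) {e : G.E} {x : G.V}
    (he : e ∈ p.edges) (hx : x ∈ G.ends e) : x ∈ p.support := by
  induction p with
  | nil => simp [Walk.edges] at he
  | cons e' h' p ih =>
    simp only [Walk.edges, List.mem_cons] at he
    rcases he with rfl | he
    · rw [h', Sym2.mem_iff] at hx
      rcases hx with rfl | rfl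
      · simp [Walk.support]
      · simp only [Walk.support, List.mem_cons]
        exact Or.inr p.start_mem_support
    · simp only [Walk.support, List.mem_cons]
      exact Or.inr (ih he)

lemma Walk.edges_nodup {u v : G.V} (p : G.Walk u v) (hp : p.IsPath) : p.edges.Nodup := by
  induction p with
  | nil => simp [Walk.edges]
  | cons e h p ih =>
    simp only [Walk.IsPath, Walk.support, List.nodup_cons] at hp
    rw [Walk.edges, List.nodup_cons]
    refine ⟨fun he => hp.1 ?_, ih hp.2⟩
    exact p.mem_support_of_mem_edges he (by rw [h, Sym2.mem_iff]; left; rfl)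

lemma Walk.isPath_tail {u v w : G.V} {e : G.E} {h : G.ends e = s(u,v)} {p : G.Walk v w}
    (hp : (Walk.cons e h p).IsPath) : p.IsPath ∧ u ∉ p.support := by
  simp only [Walk.IsPath, Walk.support, List.nodup_cons] at hp
  exact ⟨hp.2, hp.1⟩

lemma Walk.exists_edge_of_mem_support {u v x : G.V} (p : G.Walk u v) (hx : x ∈ p.support) :
    x = u ∨ ∃ e ∈ p.edges, x ∈ G.ends e := by
  induction p with
  | nil => simp [Walk.support] at hx; exact Or.inl hx
  | cons e h p ih =>
    simp only [Walk.support, List.mem_cons] at hx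
    rcases hx with rfl | hx
    · exact Or.inl rfl
    · rcases ih hx with rfl | ⟨e', he', hxe'⟩
      · exact Or.inr ⟨e, by simp [Walk.edges], by rw [h, Sym2.mem_iff]; right; rfl⟩
      · exact Or.inr ⟨e', by simp [Walk.edges, he'], hxe'⟩

/-- count of edges of a walk incident to a vertex -/
def ecnt (x : G.V) {u v : G.V} (p : G.Walk u v) : ℕ :=
  (p.edges.filter (fun e => x ∈ G.ends e)).length

lemma ecnt_cons (x : G.V) {u v w : G.V} (e : G.E) (h : G.ends e = s(u,v)) (p : G.Walk v w) :
    ecnt x (Walk.cons e h p) = (if x ∈ G.ends e then 1 else 0) + ecnt x p := by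
  simp only [ecnt, Walk.edges, List.filter_cons]
  by_cases hx : x ∈ G.ends e
  · simp [hx, Nat.add_comm]
  · simp [hx]

lemma one_le_ecnt {u v x : G.V} (p : G.Walk u v) (hx : x ∈ p.support) (huv : u ≠ v) :
    1 ≤ ecnt x p := by
  have key : ∃ e ∈ p.edges, x ∈ G.ends e := by
    rcases p.exists_edge_of_mem_support hx with rfl | h
    · cases p with
      | nil => exact absurd rfl huv
      | cons e h q =>
        exact ⟨e, by simp [Walk.edges], by rw [h, Sym2.mem_iff]; left; rfl⟩
    · exact h
  obtain ⟨e, he, hxe⟩ := key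
  have hm : e ∈ p.edges.filter (fun e => x ∈ G.ends e) := by
    rw [List.mem_filter]; exact ⟨he, by simpa using hxe⟩
  exact List.length_pos_iff.mpr (List.ne_nil_of_mem hm)

lemma two_le_ecnt {u v x : G.V} (p : G.Walk u v) (hp : p.IsPath)
    (hx : x ∈ p.support) (hxu : x ≠ u) (hxv : x ≠ v) : 2 ≤ ecnt x p := by
  induction p with
  | nil => simp [Walk.support] at hx; exact absurd hx hxu
  | cons e h q ih =>
    rename_i a b c
    obtain ⟨hq, _⟩ := Walk.isPath_tail hp
    simp only [Walk.support, List.mem_cons] at hx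
    rcases hx with rfl | hx
    · exact absurd rfl hxu
    · by_cases hv : x = b
      · subst hv
        have h1 : 1 ≤ ecnt x q := one_le_ecnt q q.start_mem_support hxv
        rw [ecnt_cons, if_pos (by rw [h, Sym2.mem_iff]; right; rfl)]
        omega
      · have h2 := ih hq hx hv hxv
        rw [ecnt_cons]
        split <;> omega

end Multigraph

namespace Multigraph

lemma ecnt_sum_le {H G : Multigraph} (D : ImmersionData H G) (v : G.V)
    (es : List H.E) (hes : es.Nodup) :
    (es.map fun f => ecnt v (D.walk f)).sum ≤ G.deg v := by
  classical
  set L : List G.E := es.flatMap (fun f => (D.walk f).edges.filter (fun e => v ∈ G.ends e))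
    with hL
  have hlen : L.length = (es.map fun f => ecnt v (D.walk f)).sum := by
    simp only [hL, List.length_flatMap, ecnt]
  have hnd : L.Nodup := by
    rw [hL, List.nodup_flatMap]
    constructor
    · intro f _
      exact ((D.walk f).edges_nodup (D.isPath f)).filter _
    · refine hes.imp ?_
      intro a b hab x hx1 hx2
      exact D.edgeDisj a b hab (List.mem_of_mem_filter hx1) (List.mem_of_mem_filter hx2)
  have hsub : L.toFinset ⊆ Finset.univ.filter (fun e => v ∈ G.ends e) := by
    intro e he
    rw [List.mem_toFinset] at he
    rw [Finset.mem_filter]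
    refine ⟨Finset.mem_univ _, ?_⟩
    obtain ⟨f, _, hf⟩ := List.mem_flatMap.mp he
    exact of_decide_eq_true ((List.mem_filter.mp hf).2)
  have hc := Finset.card_le_card hsub
  rw [List.toFinset_card_of_nodup hnd] at hc
  rw [← hlen]
  exact hc.trans_eq (by rw [deg])

lemma deg_a : K24'.deg (Sum.inl 0) = 8 := by decide
lemma deg_b : K24'.deg (Sum.inl 1) = 4 := by decide
lemma edge_at_c : ∀ (e : K24'.E) (k : Fin 4), (Sum.inr k : K24'.V) ∈ K24'.ends e →
    e = Sum.inl (k,0) ∨ e = Sum.inl (k,1) ∨ e = Sum.inr k := by unfold K24'; decide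
lemma edge_from_c : ∀ (e : K24'.E) (k : Fin 4) (w : K24'.V), K24'.ends e = s(Sum.inr k, w) →
    w = Sum.inl 0 ∨ w = Sum.inl 1 := by unfold K24'; decide
lemma not_inl : ∀ v : K24'.V, v ≠ Sum.inl 0 → v ≠ Sum.inl 1 → ∃ c, v = Sum.inr c := by unfold K24'; decide
lemma b_mem_ends_inr : ∀ k : Fin 4, (Sum.inl 1 : K24'.V) ∈ K24'.ends (Sum.inr k) := by unfold K24'; decide
lemma third_fin3 : ∀ x y : Fin 3, x ≠ y → ∃ z w : Fin 3, z ≠ w ∧ x ≠ z ∧ x ≠ w ∧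
    ∀ u : Fin 3, u = x ∨ u = z ∨ u = w := by decide

end Multigraph

namespace Multigraph

lemma Walk.exists_edge' {G : Multigraph} {u v x : G.V} (p : G.Walk u v)
    (hx : x ∈ p.support) (huv : u ≠ v) : ∃ e ∈ p.edges, x ∈ G.ends e := by
  rcases p.exists_edge_of_mem_support hx with rfl | h
  · cases p with
    | nil => exact absurd rfl huv
    | cons e h q =>
      exact ⟨e, by simp [Walk.edges], by rw [h, Sym2.mem_iff]; left; rfl⟩
  · exact h

lemma fin2_cases : ∀ t : Fin 2, t = 0 ∨ t = 1 := by decide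

lemma walk_cc {x y : K24'.V} (p : K24'.Walk x y) (hp : p.IsPath) (hxy : x ≠ y)
    (hx : ∃ c, x = Sum.inr c) (hy : ∃ c, y = Sum.inr c) :
    ∃ t : Fin 2, 2 ≤ ecnt (Sum.inl t) p := by
  obtain ⟨cx, hcx⟩ := hx
  obtain ⟨cy, hcy⟩ := hy
  cases p with
  | nil => exact absurd rfl hxy
  | cons e h q =>
    rename_i m
    have ht : ∃ t : Fin 2, m = Sum.inl t := by
      rcases edge_from_c e cx m (by rw [← hcx]; exact h) with h0 | h1
      · exact ⟨0, h0⟩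
      · exact ⟨1, h1⟩
    obtain ⟨t, rfl⟩ := ht
    refine ⟨t, two_le_ecnt _ hp ?_ (by rw [hcx]; exact Sum.inl_ne_inr) (by rw [hcy]; exact Sum.inl_ne_inr)⟩
    simp only [Walk.support, List.mem_cons]
    exact List.mem_cons_of_mem _ q.start_mem_support

variable (D : ImmersionData K33 K24')

lemma walk_endpoints (i j : Fin 3) :
    (D.pstart (i,j) = D.vmap (Sum.inl i) ∧ D.pend (i,j) = D.vmap (Sum.inr j)) ∨
    (D.pstart (i,j) = D.vmap (Sum.inr j) ∧ D.pend (i,j) = D.vmap (Sum.inl i)) := by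
  have h : s(D.pstart (i,j), D.pend (i,j)) = s(D.vmap (Sum.inl i), D.vmap (Sum.inr j)) :=
    D.ends_eq (i,j)
  rw [Sym2.eq_iff] at h
  tauto

lemma walk_ne (i j : Fin 3) : D.pstart (i,j) ≠ D.pend (i,j) := by
  have hne : D.vmap (Sum.inl i) ≠ D.vmap (Sum.inr j) :=
    fun h => absurd (D.inj h) (by simp)
  rcases walk_endpoints D i j with ⟨h1,h2⟩|⟨h1,h2⟩ <;> rw [h1,h2]
  · exact hne
  · exact hne.symm

lemma vmap_mem_support (i j : Fin 3) (x : K33.V) (hx : x = Sum.inl i ∨ x = Sum.inr j) :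
    D.vmap x ∈ (D.walk (i,j)).support := by
  rcases walk_endpoints D i j with ⟨h1,h2⟩|⟨h1,h2⟩ <;> rcases hx with rfl|rfl
  · rw [← h1]; exact Walk.start_mem_support _
  · rw [← h2]; exact Walk.end_mem_support _
  · rw [← h2]; exact Walk.end_mem_support _
  · rw [← h1]; exact Walk.start_mem_support _

lemma one_le_ecnt_endpoint (i j : Fin 3) (x : K33.V) (hx : x = Sum.inl i ∨ x = Sum.inr j) :
    1 ≤ ecnt (D.vmap x) (D.walk (i,j)) :=
  one_le_ecnt _ (vmap_mem_support D i j x hx) (walk_ne D i j)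

lemma cc_internal (i j : Fin 3) (ci cj : Fin 4)
    (hi : D.vmap (Sum.inl i) = Sum.inr ci) (hj : D.vmap (Sum.inr j) = Sum.inr cj) :
    ∃ t : Fin 2, 2 ≤ ecnt (Sum.inl t) (D.walk (i,j)) := by
  refine walk_cc (D.walk (i,j)) (D.isPath _) (walk_ne D i j) ?_ ?_
  · rcases walk_endpoints D i j with ⟨h1,_⟩|⟨h1,_⟩
    · exact ⟨ci, h1.trans hi⟩
    · exact ⟨cj, h1.trans hj⟩
  · rcases walk_endpoints D i j with ⟨_,h2⟩|⟨_,h2⟩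
    · exact ⟨cj, h2.trans hj⟩
    · exact ⟨ci, h2.trans hi⟩

end Multigraph

namespace Multigraph

lemma other_two : ∀ x : Fin 3, ∃ y z : Fin 3, y ≠ z ∧ y ≠ x ∧ z ≠ x ∧
    ∀ u : Fin 3, u = x ∨ u = y ∨ u = z := by decide

lemma third_exists : ∀ x y : Fin 3, ∃ z : Fin 3, z ≠ x ∧ z ≠ y := by decide

end Multigraph

namespace Multigraph

lemma nodup_aux1 : ∀ jb i j : Fin 3, j ≠ jb →
    ([((0:Fin 3), jb), (1, jb), (2, jb), (i, j)] : List K33.E).Nodup := by decide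

lemma nodup_aux2 : ∀ ia i1 i2 j1 j2 : Fin 3, i1 ≠ ia → i2 ≠ ia → i1 ≠ i2 → j1 ≠ j2 →
    ([(ia,(0:Fin 3)),(ia,1),(ia,2),(i1,j1),(i1,j2),(i2,j1),(i2,j2)] : List K33.E).Nodup := by
  decide

lemma nodup_aux3 : ∀ ib ik j : Fin 3, ik ≠ ib →
    ([(ib,(0:Fin 3)),(ib,1),(ib,2),(ik,j)] : List K33.E).Nodup := by decide

lemma pair_ne : ∀ x u v : Fin 3, u ≠ v → ((x,u) : K33.E) ≠ (x,v) := by decide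

lemma case2 (D : ImmersionData K33 K24') (ia jb : Fin 3)
    (hua : D.vmap (Sum.inl ia) = Sum.inl 0) (hub : D.vmap (Sum.inr jb) = Sum.inl 1) :
    False := by
  obtain ⟨i1, i2, hi12, hia1, hia2, _⟩ := other_two ia
  obtain ⟨j1, j2, hj12, hjb1, hjb2, _⟩ := other_two jb
  have hvl : ∀ i : Fin 3, i ≠ ia → ∃ c, D.vmap (Sum.inl i) = Sum.inr c := by
    intro i hi
    refine not_inl _ (fun h => ?_) (fun h => ?_)
    · exact hi (Sum.inl.inj (D.inj (h.trans hua.symm)))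
    · exact absurd (D.inj (h.trans hub.symm)) (by simp)
  have hvr : ∀ j : Fin 3, j ≠ jb → ∃ c, D.vmap (Sum.inr j) = Sum.inr c := by
    intro j hj
    refine not_inl _ (fun h => ?_) (fun h => ?_)
    · exact absurd (D.inj (h.trans hua.symm)) (by simp)
    · exact hj (Sum.inr.inj (D.inj (h.trans hub.symm)))
  have hb : ∀ i : Fin 3, 1 ≤ ecnt (Sum.inl 1) (D.walk (i, jb)) := by
    intro i
    have := one_le_ecnt_endpoint D i jb (Sum.inr jb) (Or.inr rfl)
    rwa [hub] at this
  have ha : ∀ j : Fin 3, 1 ≤ ecnt (Sum.inl 0) (D.walk (ia, j)) := by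
    intro j
    have := one_le_ecnt_endpoint D ia j (Sum.inl ia) (Or.inl rfl)
    rwa [hua] at this
  have hcc : ∀ i j : Fin 3, i ≠ ia → j ≠ jb → 2 ≤ ecnt (Sum.inl 0) (D.walk (i, j)) := by
    intro i j hi hj
    obtain ⟨ci, hci⟩ := hvl i hi
    obtain ⟨cj, hcj⟩ := hvr j hj
    obtain ⟨t, ht⟩ := cc_internal D i j ci cj hci hcj
    rcases fin2_cases t with rfl | rfl
    · exact ht
    · exfalso
      have hnd := nodup_aux1 jb i j hj
      have hsum := ecnt_sum_le D (Sum.inl 1) _ hnd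
      simp only [List.map, List.sum_cons, List.sum_nil] at hsum
      rw [deg_b] at hsum
      have h0 := hb 0; have h1 := hb 1; have h2 := hb 2
      omega
  have hnd2 := nodup_aux2 ia i1 i2 j1 j2 hia1 hia2 hi12 hj12
  have hsum := ecnt_sum_le D (Sum.inl 0) _ hnd2
  simp only [List.map, List.sum_cons, List.sum_nil] at hsum
  rw [deg_a] at hsum
  have g0 := ha 0; have g1 := ha 1; have g2 := ha 2
  have c11 := hcc i1 j1 hia1 hjb1
  have c12 := hcc i1 j2 hia1 hjb2
  have c21 := hcc i2 j1 hia2 hjb1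
  have c22 := hcc i2 j2 hia2 hjb2
  omega

lemma case1 (D : ImmersionData K33 K24') (ia ib : Fin 3) (hab : ia ≠ ib)
    (hua : D.vmap (Sum.inl ia) = Sum.inl 0) (hub : D.vmap (Sum.inl ib) = Sum.inl 1) :
    False := by
  obtain ⟨ik, hk1, hk2⟩ := third_exists ia ib
  obtain ⟨k, hk⟩ : ∃ k, D.vmap (Sum.inl ik) = Sum.inr k := by
    refine not_inl _ (fun h => ?_) (fun h => ?_)
    · exact hk1 (Sum.inl.inj (D.inj (h.trans hua.symm)))
    · exact hk2 (Sum.inl.inj (D.inj (h.trans hub.symm)))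
  have hvr : ∀ j : Fin 3, ∃ c, D.vmap (Sum.inr j) = Sum.inr c := by
    intro j
    refine not_inl _ (fun h => ?_) (fun h => ?_)
    · exact absurd (D.inj (h.trans hua.symm)) (by simp)
    · exact absurd (D.inj (h.trans hub.symm)) (by simp)
  have hb : ∀ j : Fin 3, 1 ≤ ecnt (Sum.inl 1) (D.walk (ib, j)) := by
    intro j
    have := one_le_ecnt_endpoint D ib j (Sum.inl ib) (Or.inl rfl)
    rwa [hub] at this
  have hedge : ∀ j : Fin 3, ∃ e ∈ (D.walk (ik, j)).edges,
      (Sum.inr k : K24'.V) ∈ K24'.ends e := by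
    intro j
    refine Walk.exists_edge' _ ?_ (walk_ne D ik j)
    have := vmap_mem_support D ik j (Sum.inl ik) (Or.inl rfl)
    rwa [hk] at this
  have hnotb : ∀ j : Fin 3, ∀ e ∈ (D.walk (ik, j)).edges, e ≠ Sum.inr k := by
    intro j e he heq
    subst heq
    have hbmem : (Sum.inl 1 : K24'.V) ∈ (D.walk (ik, j)).support :=
      Walk.mem_support_of_mem_edges _ he (b_mem_ends_inr k)
    obtain ⟨cj, hcj⟩ := hvr j
    have h2 : 2 ≤ ecnt (Sum.inl 1) (D.walk (ik, j)) := by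
      refine two_le_ecnt _ (D.isPath _) hbmem ?_ ?_
      · rcases walk_endpoints D ik j with ⟨h1,_⟩|⟨h1,_⟩ <;> rw [h1]
        · rw [hk]; exact Sum.inl_ne_inr
        · rw [hcj]; exact Sum.inl_ne_inr
      · rcases walk_endpoints D ik j with ⟨_,h2'⟩|⟨_,h2'⟩ <;> rw [h2']
        · rw [hcj]; exact Sum.inl_ne_inr
        · rw [hk]; exact Sum.inl_ne_inr
    have hnd := nodup_aux3 ib ik j hk2
    have hsum := ecnt_sum_le D (Sum.inl 1) _ hnd
    simp only [List.map, List.sum_cons, List.sum_nil] at hsum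
    rw [deg_b] at hsum
    have h0 := hb 0; have h1 := hb 1; have h2' := hb 2
    omega
  obtain ⟨e0, he0, hke0⟩ := hedge 0
  obtain ⟨e1, he1, hke1⟩ := hedge 1
  obtain ⟨e2, he2, hke2⟩ := hedge 2
  have d01 : e0 ≠ e1 := fun h => D.edgeDisj (ik,0) (ik,1) (pair_ne ik 0 1 (by decide)) he0 (by rw [h]; exact he1)
  have d02 : e0 ≠ e2 := fun h => D.edgeDisj (ik,0) (ik,2) (pair_ne ik 0 2 (by decide)) he0 (by rw [h]; exact he2)
  have d12 : e1 ≠ e2 := fun h => D.edgeDisj (ik,1) (ik,2) (pair_ne ik 1 2 (by decide)) he1 (by rw [h]; exact he2)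
  have n0 : e0 = Sum.inl (k,0) ∨ e0 = Sum.inl (k,1) := by
    rcases edge_at_c e0 k hke0 with h|h|h
    · exact Or.inl h
    · exact Or.inr h
    · exact absurd h (hnotb 0 e0 he0)
  have n1 : e1 = Sum.inl (k,0) ∨ e1 = Sum.inl (k,1) := by
    rcases edge_at_c e1 k hke1 with h|h|h
    · exact Or.inl h
    · exact Or.inr h
    · exact absurd h (hnotb 1 e1 he1)
  have n2 : e2 = Sum.inl (k,0) ∨ e2 = Sum.inl (k,1) := by
    rcases edge_at_c e2 k hke2 with h|h|h
    · exact Or.inl h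
    · exact Or.inr h
    · exact absurd h (hnotb 2 e2 he2)
  rcases n0 with rfl|rfl <;> rcases n1 with rfl|rfl <;> rcases n2 with rfl|rfl <;> contradiction

end Multigraph

namespace Multigraph

def ImmersionData.swapped (D : ImmersionData K33 K24') : ImmersionData K33 K24' where
  vmap := D.vmap ∘ Sum.swap
  inj := D.inj.comp (fun x y h => by rw [← Sum.swap_swap x, ← Sum.swap_swap y, h])
  pstart e := D.pstart (e.2, e.1)
  pend e := D.pend (e.2, e.1)
  walk e := D.walk (e.2, e.1)
  ends_eq e := by
    have h : s(D.pstart (e.2, e.1), D.pend (e.2, e.1)) =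
        s(D.vmap (Sum.inl e.2), D.vmap (Sum.inr e.1)) := D.ends_eq (e.2, e.1)
    show s(D.pstart (e.2, e.1), D.pend (e.2, e.1)) =
      s(D.vmap (Sum.swap (Sum.inl e.1)), D.vmap (Sum.swap (Sum.inr e.2)))
    rw [h]
    exact Sym2.eq_swap
  isPath e := D.isPath _
  edgeDisj e e' h := D.edgeDisj _ _ (fun hh => h (by
    have h1 : e.2 = e'.2 := congrArg Prod.fst hh
    have h2 : e.1 = e'.1 := congrArg Prod.snd hh
    exact Prod.ext h2 h1))

lemma no_immersion : ¬ Immerses K33 K24' := by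
  rintro ⟨D⟩
  have key : ∀ (D : ImmersionData K33 K24') (ia : Fin 3),
      D.vmap (Sum.inl ia) = Sum.inl 0 → False := by
    intro D ia hua
    have hbij : Function.Bijective D.vmap :=
      (Fintype.bijective_iff_injective_and_card _).mpr ⟨D.inj, by decide⟩
    obtain ⟨ub, hub⟩ := hbij.surjective (Sum.inl 1)
    cases ub with
    | inl ib =>
      refine case1 D ia ib (fun h => ?_) hua hub
      subst h
      rw [hua] at hub
      injection hub with h0
      exact absurd h0 (by decide)
    | inr jb => exact case2 D ia jb hua hub
  have hbij : Function.Bijective D.vmap :=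
    (Fintype.bijective_iff_injective_and_card _).mpr ⟨D.inj, by decide⟩
  obtain ⟨ua, hua⟩ := hbij.surjective (Sum.inl 0)
  cases ua with
  | inl ia => exact key D ia hua
  | inr ia => exact key D.swapped ia hua

end Multigraph


open Multigraph in
/-- `K'_{2,4}` contains no immersion of `K_{3,3}` and is weakly
5-edge-connected. -/
theorem K24'_properties : ¬ Immerses K33 K24' ∧ K24'.Weakly5EC := by
  refine ⟨no_immersion, ?_⟩
  unfold Multigraph.Weakly5EC Multigraph.Internally4EC Multigraph.EdgeConnGe
  decide
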